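/- arXiv:1606.01043 — 4 statements merged into one kernel-verified Lean document; each statement's English description precedes it below -/
import Mathlib

section
/- Let G be a triangle-free graph and let I be drawn from the hard-core model at fugacity λ > 0. For any vertex v and any set S of neighbors of v, conditioned on the event that the uncovered neighbors of v are exactly the vertices of S with |S| = j, the probability that v is uncovered equals (1+λ)^{-j}. -/
open Finset MeasureTheory Real
open scoped Classical

noncomputable def indSets {V : Type*} [Fintype V] (G : SimpleGraph V) : Finset (Finset V) :=
  Finset.univ.filter (fun s => ∀ u ∈ s, ∀ v ∈ s, ¬ G.Adj u v)

/-- The independence polynomial (hard-core partition function). -/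
noncomputable def indPoly {V : Type*} [Fintype V] (G : SimpleGraph V) (x : ℝ) : ℝ :=
  ∑ s ∈ indSets G, x ^ s.card

/-- Expected size of an independent set from the hard-core model at fugacity x. -/
noncomputable def avgSize {V : Type*} [Fintype V] (G : SimpleGraph V) (x : ℝ) : ℝ :=
  x * deriv (indPoly G) x / indPoly G x

theorem stmt3 {V : Type*} [Fintype V] (G : SimpleGraph V) (htf : G.CliqueFree 3)
    (l : ℝ) (hl : 0 < l) (v : V) (S : Finset V) (j : ℕ)
    (hS : S ⊆ G.neighborFinset v) (hj : S.card = j)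
    (hne : ∃ s ∈ indSets G,
      (G.neighborFinset v).filter (fun u => ∀ w, G.Adj u w → w ∉ s) = S) :
    (∑ s ∈ (indSets G).filter (fun s =>
        ((G.neighborFinset v).filter (fun u => ∀ w, G.Adj u w → w ∉ s) = S) ∧
        ∀ u, G.Adj v u → u ∉ s), l ^ s.card) /
      (∑ s ∈ (indSets G).filter (fun s =>
        (G.neighborFinset v).filter (fun u => ∀ w, G.Adj u w → w ∉ s) = S), l ^ s.card)
      = ((1 + l) ^ j)⁻¹ := by
  classical
  -- no two neighbors of v are adjacent
  have hNindep : ∀ a ∈ G.neighborFinset v, ∀ b ∈ G.neighborFinset v, ¬ G.Adj a b := by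
    intro a ha b hb hab
    rw [SimpleGraph.mem_neighborFinset] at ha hb
    exact htf {v, a, b} (SimpleGraph.is3Clique_triple_iff.2 ⟨ha, hb, hab⟩)
  have hSN : ∀ a ∈ S, G.Adj v a := fun a ha => (SimpleGraph.mem_neighborFinset _ _ _).1 (hS ha)
  have hSindep : ∀ a ∈ S, ∀ b ∈ S, ¬ G.Adj a b := fun a ha b hb => hNindep a (hS ha) b (hS hb)
  have hmemInd : ∀ s : Finset V, s ∈ indSets G ↔ ∀ u ∈ s, ∀ w ∈ s, ¬ G.Adj u w := by
    intro s; simp [indSets]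
  set Dn := (indSets G).filter (fun s =>
      ((G.neighborFinset v).filter (fun u => ∀ w, G.Adj u w → w ∉ s) = S) ∧
      ∀ u, G.Adj v u → u ∉ s) with hDn
  set Dd := (indSets G).filter (fun s =>
      (G.neighborFinset v).filter (fun u => ∀ w, G.Adj u w → w ∉ s) = S) with hDd
  -- for s ∈ Dd, occupied neighbors of v are in S
  have hocc : ∀ s ∈ Dd, ∀ u, G.Adj v u → u ∈ s → u ∈ S := by
    intro s hs u hu hus
    rw [hDd, mem_filter] at hs
    rw [← hs.2]
    refine mem_filter.2 ⟨(SimpleGraph.mem_neighborFinset _ _ _).2 hu, fun w hw hws => ?_⟩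
    exact (hmemInd s).1 hs.1 u hus w hws hw
  -- S elements have no neighbor in s, for s ∈ Dd
  have hSunc : ∀ s ∈ Dd, ∀ a ∈ S, ∀ w ∈ s, ¬ G.Adj a w := by
    intro s hs a ha w hw haw
    rw [hDd, mem_filter] at hs
    rw [← hs.2] at ha
    exact (mem_filter.1 ha).2 w haw hw
  -- key: the filter set of s equals that of s \ S (more generally, unions with subsets of S)
  have hfilt : ∀ t A : Finset V, A ⊆ S →
      (G.neighborFinset v).filter (fun u => ∀ w, G.Adj u w → w ∉ t ∪ A) =
      (G.neighborFinset v).filter (fun u => ∀ w, G.Adj u w → w ∉ t) := by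
    intro t A hA
    apply filter_congr
    intro u hu
    constructor
    · intro h w hw hwt; exact h w hw (mem_union_left _ hwt)
    · intro h w hw hws
      rcases mem_union.1 hws with h1 | h1
      · exact h w hw h1
      · exact hNindep u hu w (hS (hA h1)) hw
  -- forward: s ∈ Dd gives (s \ S, s ∩ S)
  have hfwd : ∀ s ∈ Dd, s \ S ∈ Dn ∧ s ∩ S ⊆ S := by
    intro s hs
    have hsDd := hs
    rw [hDd, mem_filter] at hs
    refine ⟨?_, inter_subset_right⟩
    rw [hDn, mem_filter]
    refine ⟨(hmemInd _).2 fun a ha b hb => (hmemInd s).1 hs.1 a (sdiff_subset ha) b (sdiff_subset hb), ?_, ?_⟩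
    · have : s \ S ∪ (s ∩ S) = s := by
        rw [sdiff_union_inter]
      calc (G.neighborFinset v).filter (fun u => ∀ w, G.Adj u w → w ∉ s \ S)
          = (G.neighborFinset v).filter (fun u => ∀ w, G.Adj u w → w ∉ (s \ S) ∪ (s ∩ S)) :=
            (hfilt (s \ S) (s ∩ S) inter_subset_right).symm
        _ = S := by rw [this]; exact hs.2
    · intro u hu hus
      have := hocc s hsDd u hu (sdiff_subset hus)
      exact (mem_sdiff.1 hus).2 this
  -- backward: t ∈ Dn, A ⊆ S gives t ∪ A ∈ Dd
  have hbwd : ∀ t ∈ Dn, ∀ A ⊆ S, t ∪ A ∈ Dd := by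
    intro t ht A hA
    have htDn := ht
    rw [hDn, mem_filter] at ht
    obtain ⟨htind, htU, htdis⟩ := ht
    have htS : ∀ a ∈ S, ∀ w ∈ t, ¬ G.Adj a w := by
      intro a ha w hw haw
      rw [← htU] at ha
      exact (mem_filter.1 ha).2 w haw hw
    rw [hDd, mem_filter]
    constructor
    · refine (hmemInd _).2 fun a ha b hb hab => ?_
      rcases mem_union.1 ha with h1 | h1 <;> rcases mem_union.1 hb with h2 | h2
      · exact (hmemInd t).1 htind a h1 b h2 hab
      · exact htS b (hA h2) a h1 (G.adj_symm hab)
      · exact htS a (hA h1) b h2 hab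
      · exact hSindep a (hA h1) b (hA h2) hab
    · rw [hfilt t A hA]; exact htU
  -- disjointness of t and S for t ∈ Dn
  have hdis : ∀ t ∈ Dn, Disjoint t S := by
    intro t ht
    rw [hDn, mem_filter] at ht
    exact disjoint_left.2 fun a hat haS => ht.2.2 a (hSN a haS) hat
  -- the sum over Dd equals sum over Dn ×ˢ S.powerset
  have hsum : ∑ s ∈ Dd, l ^ s.card =
      ∑ p ∈ Dn ×ˢ S.powerset, l ^ (p.1.card + p.2.card) := by
    refine Finset.sum_bij' (fun s _ => (s \ S, s ∩ S)) (fun p _ => p.1 ∪ p.2) ?_ ?_ ?_ ?_ ?_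
    · intro s hs
      exact mem_product.2 ⟨(hfwd s hs).1, mem_powerset.2 (hfwd s hs).2⟩
    · intro p hp
      rw [mem_product] at hp
      exact hbwd p.1 hp.1 p.2 (mem_powerset.1 hp.2)
    · intro s hs
      simp only
      rw [sdiff_union_inter]
    · intro p hp
      rw [mem_product] at hp
      have h1 := hdis p.1 hp.1
      have h2 := mem_powerset.1 hp.2
      ext1
      · simp only
        rw [union_sdiff_distrib, sdiff_eq_empty_iff_subset.2 h2, union_empty,
          sdiff_eq_self_of_disjoint h1]
      · simp only
        rw [union_inter_distrib_right, (inter_eq_left.2 h2 : p.2 ∩ S = p.2)]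
        rw [disjoint_iff_inter_eq_empty.1 h1, empty_union]
    · intro s hs
      congr 1
      rw [← card_union_of_disjoint (disjoint_sdiff_inter s S), sdiff_union_inter]
  have hpow : ∑ A ∈ S.powerset, l ^ A.card = (1 + l) ^ j := by
    have := Finset.prod_add (fun _ => l) (fun _ => (1:ℝ)) S
    simp only [prod_const, prod_const_one, mul_one] at this
    rw [← hj, add_comm]
    simpa using this.symm
  have hfactor : ∑ s ∈ Dd, l ^ s.card = (∑ t ∈ Dn, l ^ t.card) * (1 + l) ^ j := by
    rw [hsum, Finset.sum_product]
    rw [Finset.sum_mul]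
    refine Finset.sum_congr rfl fun t ht => ?_
    rw [← hpow, Finset.mul_sum]
    refine Finset.sum_congr rfl fun A hA => ?_
    rw [pow_add]
  -- numerator positive
  have hpos : 0 < ∑ t ∈ Dn, l ^ t.card := by
    obtain ⟨s, hsI, hsU⟩ := hne
    have hsDd : s ∈ Dd := by rw [hDd, mem_filter]; exact ⟨hsI, hsU⟩
    have htDn := (hfwd s hsDd).1
    refine Finset.sum_pos' (fun t _ => le_of_lt (pow_pos hl _)) ⟨s \ S, htDn, pow_pos hl _⟩
  rw [hfactor]
  rw [eq_comm, inv_eq_iff_eq_inv, eq_comm, inv_div]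
  rw [mul_comm, mul_div_assoc, div_self (ne_of_gt hpos), mul_one]
end

section
/- Let G be a triangle-free graph on n vertices with maximum degree at most d, and let λ > 0. Then the occupancy fraction satisfies (1/n)·ᾱ_G(λ) ≥ (λ/(1+λ)) · W(d·log(1+λ)) / (d·log(1+λ)), where W is the Lambert W function (the inverse of x ↦ x e^x on the positive reals). -/
open Finset MeasureTheory Real
open scoped Classical

section aux
set_option linter.unusedSectionVars false
variable {V : Type*} [Fintype V] (G : SimpleGraph V)

lemma mem_indSets {s : Finset V} :
    s ∈ indSets G ↔ ∀ u ∈ s, ∀ w ∈ s, ¬ G.Adj u w := by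
  simp [indSets]

lemma indSets_subset {s t : Finset V} (hs : s ∈ indSets G) (hts : t ⊆ s) :
    t ∈ indSets G := by
  rw [mem_indSets] at hs ⊢
  exact fun u hu w hw => hs u (hts hu) w (hts hw)

lemma empty_mem_indSets : (∅ : Finset V) ∈ indSets G := by
  simp [mem_indSets]

lemma indPoly_pos {x : ℝ} (hx : 0 < x) : 0 < indPoly G x := by
  have h1 : (1:ℝ) ≤ indPoly G x := by
    have := Finset.single_le_sum (f := fun s : Finset V => x ^ s.card)
      (fun s _ => le_of_lt (pow_pos hx _)) (empty_mem_indSets G)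
    simpa [indPoly] using this
  linarith

lemma mul_deriv_indPoly (x : ℝ) :
    x * deriv (indPoly G) x = ∑ s ∈ indSets G, (s.card : ℝ) * x ^ s.card := by
  have h : HasDerivAt (indPoly G)
      (∑ s ∈ indSets G, (s.card : ℝ) * x ^ (s.card - 1)) x := by
    refine HasDerivAt.congr_of_eventuallyEq (HasDerivAt.sum (u := indSets G)
      (A := fun s (y : ℝ) => y ^ s.card) ?_)
      (Filter.Eventually.of_forall fun y => by simp [indPoly, Finset.sum_apply])
    intro s _
    simpa using (hasDerivAt_pow s.card x)
  rw [h.deriv, Finset.mul_sum]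
  apply Finset.sum_congr rfl
  intro s _
  rcases Nat.eq_zero_or_pos s.card with h0 | h0
  · simp [h0]
  · have : s.card - 1 + 1 = s.card := Nat.succ_pred_eq_of_pos h0
    rw [mul_comm ((s.card : ℝ)) (x ^ (s.card - 1)), ← mul_assoc, ← pow_succ', this]
    ring

lemma nbhd_indep (htf : G.CliqueFree 3) {v u1 u2 : V}
    (h1 : u1 ∈ G.neighborFinset v) (h2 : u2 ∈ G.neighborFinset v) : ¬ G.Adj u1 u2 := by
  rw [SimpleGraph.mem_neighborFinset] at h1 h2
  intro hadj
  exact htf {v, u1, u2} (SimpleGraph.is3Clique_triple_iff.2 ⟨h1, h2, hadj⟩)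

noncomputable def extU (v : V) (K : Finset V) : Finset V :=
  (G.neighborFinset v).filter (fun u => K ∩ G.neighborFinset u = ∅)

noncomputable def Ynum (v : V) (s : Finset V) : ℕ :=
  ((G.neighborFinset v).filter (fun u => s ∩ G.neighborFinset u = ∅)).card

lemma sum_powerset_pow {W : Type*} (U : Finset W) (l : ℝ) :
    ∑ T ∈ U.powerset, l ^ T.card = (1 + l) ^ U.card := by
  have h := Finset.prod_add (fun _ : W => l) (fun _ => (1 : ℝ)) U
  simp only [Finset.prod_const, one_pow, mul_one] at h
  rw [add_comm 1 l, h]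

lemma image_props {v : V} {K : Finset V}
    (hK : K ∈ (indSets G).image (fun s => s \ insert v (G.neighborFinset v))) :
    v ∉ K ∧ K ∩ G.neighborFinset v = ∅ := by
  obtain ⟨s₀, _, rfl⟩ := Finset.mem_image.1 hK
  constructor
  · intro h
    exact Finset.disjoint_left.1 Finset.sdiff_disjoint h (Finset.mem_insert_self _ _)
  · rw [Finset.eq_empty_iff_forall_notMem]
    intro x hx
    exact Finset.disjoint_left.1 Finset.sdiff_disjoint (Finset.mem_inter.1 hx).1
      (Finset.mem_insert_of_mem (Finset.mem_inter.1 hx).2)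

lemma Y_insert {v : V} {K : Finset V} : Ynum G v (insert v K) = 0 := by
  rw [Ynum, Finset.card_eq_zero, Finset.filter_eq_empty_iff]
  intro u hu
  have : v ∈ insert v K ∩ G.neighborFinset u := by
    refine Finset.mem_inter.2 ⟨Finset.mem_insert_self _ _, ?_⟩
    rw [SimpleGraph.mem_neighborFinset] at hu ⊢
    exact hu.symm
  intro h
  rw [h] at this
  exact Finset.notMem_empty v this

lemma Y_union (htf : G.CliqueFree 3) {v : V} {K T : Finset V} (hT : T ⊆ extU G v K) :
    Ynum G v (K ∪ T) = (extU G v K).card := by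
  rw [Ynum, extU]
  congr 1
  apply Finset.filter_congr
  intro u hu
  constructor
  · intro h
    rw [Finset.eq_empty_iff_forall_notMem] at h ⊢
    intro x hx
    exact h x (Finset.mem_inter.2
      ⟨Finset.mem_union_left _ (Finset.mem_inter.1 hx).1, (Finset.mem_inter.1 hx).2⟩)
  · intro h
    rw [Finset.eq_empty_iff_forall_notMem] at h ⊢
    intro x hx
    obtain ⟨hxKT, hxu⟩ := Finset.mem_inter.1 hx
    rcases Finset.mem_union.1 hxKT with hxK | hxT
    · exact h x (Finset.mem_inter.2 ⟨hxK, hxu⟩)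
    · have hxN : x ∈ G.neighborFinset v := (Finset.mem_filter.1 (hT hxT)).1
      exact nbhd_indep G htf hu hxN ((SimpleGraph.mem_neighborFinset G u x).1 hxu)

lemma fiber_eq (htf : G.CliqueFree 3) (v : V) {K : Finset V}
    (hK : K ∈ (indSets G).image (fun s => s \ insert v (G.neighborFinset v))) :
    (indSets G).filter (fun s => s \ insert v (G.neighborFinset v) = K)
      = insert (insert v K) ((extU G v K).powerset.image (fun T => K ∪ T)) := by
  set N := G.neighborFinset v with hN
  set C := insert v N with hC
  obtain ⟨s₀, hs₀, rfl⟩ := Finset.mem_image.1 hK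
  set K := s₀ \ C with hKdef
  have hKind : K ∈ indSets G := indSets_subset G hs₀ (Finset.sdiff_subset)
  have hKC : ∀ a ∈ K, a ∉ C := fun a ha => Finset.disjoint_left.1 Finset.sdiff_disjoint ha
  have hvN : v ∉ N := by simp [hN]
  ext s
  simp only [Finset.mem_filter, Finset.mem_insert, Finset.mem_image, Finset.mem_powerset]
  constructor
  · rintro ⟨hs, hsC⟩
    rw [mem_indSets] at hs
    by_cases hv : v ∈ s
    · left
      ext x
      simp only [Finset.mem_insert]
      constructor
      · intro hx
        by_cases hxC : x ∈ C
        · rcases Finset.mem_insert.1 hxC with h | h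
          · exact Or.inl h
          · exact absurd ((SimpleGraph.mem_neighborFinset G v x).1 h) (hs v hv x hx)
        · exact Or.inr (by rw [← hsC]; exact Finset.mem_sdiff.2 ⟨hx, hxC⟩)
      · rintro (rfl | hx)
        · exact hv
        · exact Finset.sdiff_subset (hsC ▸ hx)
    · right
      refine ⟨s ∩ N, ?_, ?_⟩
      · intro u hu
        have huN : u ∈ N := (Finset.mem_inter.1 hu).2
        have hus : u ∈ s := (Finset.mem_inter.1 hu).1
        rw [extU, Finset.mem_filter]
        refine ⟨huN, ?_⟩
        rw [Finset.eq_empty_iff_forall_notMem]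
        intro k hk
        have hkK : k ∈ K := (Finset.mem_inter.1 hk).1
        have hknb : G.Adj u k := (SimpleGraph.mem_neighborFinset G u k).1 (Finset.mem_inter.1 hk).2
        exact hs u hus k (Finset.sdiff_subset (hsC ▸ hkK)) hknb
      · ext x
        simp only [Finset.mem_union, Finset.mem_inter]
        constructor
        · rintro (hx | ⟨hx, _⟩)
          · exact Finset.sdiff_subset (hsC ▸ hx)
          · exact hx
        · intro hx
          by_cases hxC : x ∈ C
          · rcases Finset.mem_insert.1 hxC with h | h
            · exact absurd (h ▸ hx) hv
            · exact Or.inr ⟨hx, h⟩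
          · exact Or.inl (by rw [← hsC]; exact Finset.mem_sdiff.2 ⟨hx, hxC⟩)
  · rintro (rfl | ⟨T, hT, rfl⟩)
    · constructor
      · rw [mem_indSets]
        intro a ha b hb hadj
        rcases Finset.mem_insert.1 ha with rfl | haK
        · rcases Finset.mem_insert.1 hb with rfl | hbK
          · exact G.irrefl hadj
          · exact hKC b hbK (Finset.mem_insert_of_mem ((SimpleGraph.mem_neighborFinset G a b).2 hadj))
        · rcases Finset.mem_insert.1 hb with rfl | hbK
          · exact hKC a haK (Finset.mem_insert_of_mem ((SimpleGraph.mem_neighborFinset G b a).2 hadj.symm))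
          · exact (mem_indSets G).1 hKind a haK b hbK hadj
      · ext x
        simp only [Finset.mem_sdiff, Finset.mem_insert]
        constructor
        · rintro ⟨rfl | hxK, hxC⟩
          · exact absurd (Finset.mem_insert_self x N) hxC
          · exact hxK
        · intro hx
          exact ⟨Or.inr hx, hKC x hx⟩
    · have hTN : T ⊆ N := hT.trans (Finset.filter_subset _ _)
      constructor
      · rw [mem_indSets]
        intro a ha b hb hadj
        rcases Finset.mem_union.1 ha with haK | haT
        · rcases Finset.mem_union.1 hb with hbK | hbT
          · exact (mem_indSets G).1 hKind a haK b hbK hadj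
          · have := (Finset.mem_filter.1 (hT hbT)).2
            have : a ∈ K ∩ G.neighborFinset b :=
              Finset.mem_inter.2 ⟨haK, (SimpleGraph.mem_neighborFinset G b a).2 hadj.symm⟩
            simp_all
        · rcases Finset.mem_union.1 hb with hbK | hbT
          · have := (Finset.mem_filter.1 (hT haT)).2
            have : b ∈ K ∩ G.neighborFinset a :=
              Finset.mem_inter.2 ⟨hbK, (SimpleGraph.mem_neighborFinset G a b).2 hadj⟩
            simp_all
          · exact nbhd_indep G htf (hTN haT) (hTN hbT) hadj
      · ext x
        simp only [Finset.mem_sdiff, Finset.mem_union]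
        constructor
        · rintro ⟨hxK | hxT, hxC⟩
          · exact hxK
          · exact absurd (Finset.mem_insert_of_mem (hTN hxT)) hxC
        · intro hx
          exact ⟨Or.inl hx, hKC x hx⟩

lemma fiber_sum (htf : G.CliqueFree 3) (v : V) (F : Finset V → ℝ) :
    ∑ s ∈ indSets G, F s
      = ∑ K ∈ (indSets G).image (fun s => s \ insert v (G.neighborFinset v)),
          (F (insert v K) + ∑ T ∈ (extU G v K).powerset, F (K ∪ T)) := by
  rw [← Finset.sum_fiberwise_of_maps_to
    (g := fun s => s \ insert v (G.neighborFinset v))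
    (fun s hs => Finset.mem_image_of_mem _ hs) F]
  apply Finset.sum_congr rfl
  intro K hK
  rw [fiber_eq G htf v hK]
  have hKC : ∀ a ∈ K, a ∉ insert v (G.neighborFinset v) := by
    obtain ⟨s₀, hs₀, rfl⟩ := Finset.mem_image.1 hK
    exact fun a ha => Finset.disjoint_left.1 Finset.sdiff_disjoint ha
  have hvK : v ∉ K := fun h => hKC v h (Finset.mem_insert_self _ _)
  have hvN : v ∉ G.neighborFinset v := by simp
  rw [Finset.sum_insert, Finset.sum_image]
  · intro T₁ hT₁ T₂ hT₂ heq
    simp only at heq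
    have h1 : T₁ ⊆ G.neighborFinset v :=
      (Finset.mem_powerset.1 hT₁).trans (Finset.filter_subset _ _)
    have h2 : T₂ ⊆ G.neighborFinset v :=
      (Finset.mem_powerset.1 hT₂).trans (Finset.filter_subset _ _)
    ext x
    constructor
    · intro hx
      rcases Finset.mem_union.1 (heq ▸ Finset.mem_union_right K hx) with h | h
      · exact absurd (Finset.mem_insert_of_mem (h1 hx)) (hKC x h)
      · exact h
    · intro hx
      rcases Finset.mem_union.1 (heq ▸ Finset.mem_union_right K hx) with h | h
      · exact absurd (Finset.mem_insert_of_mem (h2 hx)) (hKC x h)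
      · exact h
  · intro hmem
    obtain ⟨T, hT, heq⟩ := Finset.mem_image.1 hmem
    have : v ∈ K ∪ T := heq ▸ Finset.mem_insert_self v K
    rcases Finset.mem_union.1 this with h | h
    · exact hvK h
    · exact hvN ((Finset.mem_powerset.1 hT).trans (Finset.filter_subset _ _) h)


lemma identity1 (htf : G.CliqueFree 3) (v : V) (l : ℝ) :
    (1 + l) * ∑ s ∈ indSets G, (if v ∈ s then l ^ s.card else 0)
      = l * ∑ s ∈ indSets G, (if s ∩ G.neighborFinset v = ∅ then l ^ s.card else 0) := by
  rw [Finset.mul_sum, Finset.mul_sum, fiber_sum G htf v, fiber_sum G htf v]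
  apply Finset.sum_congr rfl
  intro K hK
  obtain ⟨hvK, hKN⟩ := image_props G hK
  have hvN : v ∉ G.neighborFinset v := by simp
  have hcard : (insert v K).card = K.card + 1 := Finset.card_insert_of_notMem hvK
  have hTn : ∀ T ∈ (extU G v K).powerset, v ∉ K ∪ T := by
    intro T hT hmem
    rcases Finset.mem_union.1 hmem with h | h
    · exact hvK h
    · exact hvN (((Finset.mem_powerset.1 hT).trans (Finset.filter_subset _ _)) h)
  have hins : insert v K ∩ G.neighborFinset v = ∅ := by
    rw [Finset.insert_inter_of_notMem hvN]
    exact hKN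
  have hunion : ∀ T, T ⊆ extU G v K → (K ∪ T) ∩ G.neighborFinset v = T := by
    intro T hT
    rw [Finset.union_inter_distrib_right, hKN, Finset.empty_union]
    exact Finset.inter_eq_left.2 (hT.trans (Finset.filter_subset _ _))
  have hL : ∑ T ∈ (extU G v K).powerset,
      ((1 + l) * if v ∈ K ∪ T then l ^ (K ∪ T).card else 0) = 0 :=
    Finset.sum_eq_zero (fun T hT => by rw [if_neg (hTn T hT), mul_zero])
  have hR : ∑ T ∈ (extU G v K).powerset,
      (l * if (K ∪ T) ∩ G.neighborFinset v = ∅ then l ^ (K ∪ T).card else 0)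
        = l * l ^ K.card := by
    rw [Finset.sum_eq_single_of_mem ∅ (Finset.empty_mem_powerset _)]
    · rw [if_pos (hunion ∅ (Finset.empty_subset _)), Finset.union_empty]
    · intro T hT hne
      rw [hunion T (Finset.mem_powerset.1 hT), if_neg hne, mul_zero]
  rw [hL, hR, if_pos (Finset.mem_insert_self v K), if_pos hins, hcard, add_zero, pow_succ]
  ring

lemma identity2 (htf : G.CliqueFree 3) (v : V) {l : ℝ} (hl : 0 < l) :
    ∑ s ∈ indSets G, (if s ∩ G.neighborFinset v = ∅ then l ^ s.card else 0)
      = ∑ s ∈ indSets G, l ^ s.card * Real.exp (-(Ynum G v s : ℝ) * Real.log (1 + l)) := by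
  rw [fiber_sum G htf v, fiber_sum G htf v]
  apply Finset.sum_congr rfl
  intro K hK
  obtain ⟨hvK, hKN⟩ := image_props G hK
  have h1l : (0:ℝ) < 1 + l := by linarith
  have hvN : v ∉ G.neighborFinset v := by simp
  have hcard : (insert v K).card = K.card + 1 := Finset.card_insert_of_notMem hvK
  have hins : insert v K ∩ G.neighborFinset v = ∅ := by
    rw [Finset.insert_inter_of_notMem hvN]
    exact hKN
  have hunion : ∀ T, T ⊆ extU G v K → (K ∪ T) ∩ G.neighborFinset v = T := by
    intro T hT
    rw [Finset.union_inter_distrib_right, hKN, Finset.empty_union]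
    exact Finset.inter_eq_left.2 (hT.trans (Finset.filter_subset _ _))
  have hcardU : ∀ T, T ⊆ extU G v K → (K ∪ T).card = K.card + T.card := by
    intro T hT
    apply Finset.card_union_of_disjoint
    rw [Finset.disjoint_left]
    intro a haK haT
    have : a ∈ K ∩ G.neighborFinset v :=
      Finset.mem_inter.2 ⟨haK, (hT.trans (Finset.filter_subset _ _)) haT⟩
    rw [hKN] at this
    exact Finset.notMem_empty a this
  have hE : Real.exp (-((extU G v K).card : ℝ) * Real.log (1 + l))
      * (1 + l) ^ (extU G v K).card = 1 := by
    rw [neg_mul, Real.exp_neg, ← Real.log_pow, Real.exp_log (pow_pos h1l _)]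
    exact inv_mul_cancel₀ (ne_of_gt (pow_pos h1l _))
  have hLsum : ∑ T ∈ (extU G v K).powerset,
      (if (K ∪ T) ∩ G.neighborFinset v = ∅ then l ^ (K ∪ T).card else 0) = l ^ K.card := by
    rw [Finset.sum_eq_single_of_mem ∅ (Finset.empty_mem_powerset _)]
    · rw [if_pos (hunion ∅ (Finset.empty_subset _)), Finset.union_empty]
    · intro T hT hne
      rw [hunion T (Finset.mem_powerset.1 hT), if_neg hne]
  have hRsum : ∑ T ∈ (extU G v K).powerset,
      (l ^ (K ∪ T).card * Real.exp (-(Ynum G v (K ∪ T) : ℝ) * Real.log (1 + l)))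
        = l ^ K.card := by
    have hterm : ∀ T ∈ (extU G v K).powerset,
        l ^ (K ∪ T).card * Real.exp (-(Ynum G v (K ∪ T) : ℝ) * Real.log (1 + l))
          = (l ^ K.card * Real.exp (-((extU G v K).card : ℝ) * Real.log (1 + l))) * l ^ T.card := by
      intro T hT
      rw [Y_union G htf (Finset.mem_powerset.1 hT), hcardU T (Finset.mem_powerset.1 hT), pow_add]
      ring
    rw [Finset.sum_congr rfl hterm, ← Finset.mul_sum, sum_powerset_pow, mul_assoc, hE, mul_one]
  rw [hLsum, hRsum, if_pos hins, Y_insert G]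
  simp [hcard]


lemma handshake {d : ℕ} (hdeg : ∀ v, G.degree v ≤ d) (s : Finset V) :
    ∑ v : V, (Ynum G v s : ℝ)
      ≤ (d : ℝ) * ∑ v : V, (if s ∩ G.neighborFinset v = ∅ then (1:ℝ) else 0) := by
  have h1 : ∀ v : V, (Ynum G v s : ℝ)
      = ∑ u : V, (if u ∈ G.neighborFinset v ∧ s ∩ G.neighborFinset u = ∅ then (1:ℝ) else 0) := by
    intro v
    have hfe : (G.neighborFinset v).filter (fun u => s ∩ G.neighborFinset u = ∅)
        = Finset.univ.filter (fun u => u ∈ G.neighborFinset v ∧ s ∩ G.neighborFinset u = ∅) := by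
      ext u; simp
    rw [Ynum, hfe, Finset.card_filter]
    push_cast
    rfl
  calc ∑ v : V, (Ynum G v s : ℝ)
      = ∑ v : V, ∑ u : V,
          (if u ∈ G.neighborFinset v ∧ s ∩ G.neighborFinset u = ∅ then (1:ℝ) else 0) :=
        Finset.sum_congr rfl (fun v _ => h1 v)
    _ = ∑ u : V, ∑ v : V,
          (if u ∈ G.neighborFinset v ∧ s ∩ G.neighborFinset u = ∅ then (1:ℝ) else 0) :=
        Finset.sum_comm
    _ = ∑ u : V, (if s ∩ G.neighborFinset u = ∅ then (G.degree u : ℝ) else 0) := by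
        apply Finset.sum_congr rfl
        intro u _
        by_cases hP : s ∩ G.neighborFinset u = ∅
        · rw [if_pos hP]
          simp only [hP, and_true]
          have hsymm : ∀ v : V, (u ∈ G.neighborFinset v) = (v ∈ G.neighborFinset u) := by
            intro v
            simp [SimpleGraph.mem_neighborFinset, SimpleGraph.adj_comm]
          simp only [hsymm]
          rw [Finset.sum_boole]
          norm_cast
          rw [Finset.filter_mem_eq_inter, Finset.univ_inter,
            SimpleGraph.card_neighborFinset_eq_degree]
        · simp [hP]
    _ ≤ ∑ u : V, (d : ℝ) * (if s ∩ G.neighborFinset u = ∅ then (1:ℝ) else 0) := by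
        apply Finset.sum_le_sum
        intro u _
        by_cases hP : s ∩ G.neighborFinset u = ∅
        · simp only [if_pos hP, mul_one]
          exact_mod_cast hdeg u
        · simp [hP]
    _ = (d : ℝ) * ∑ v : V, (if s ∩ G.neighborFinset v = ∅ then (1:ℝ) else 0) := by
        rw [Finset.mul_sum]

lemma sum_card_eq (l : ℝ) :
    ∑ v : V, ∑ s ∈ indSets G, (if v ∈ s then l ^ s.card else 0)
      = ∑ s ∈ indSets G, (s.card : ℝ) * l ^ s.card := by
  rw [Finset.sum_comm]
  apply Finset.sum_congr rfl
  intro s _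
  rw [Finset.sum_ite_mem, Finset.univ_inter, Finset.sum_const, nsmul_eq_mul]

lemma global_handshake {d : ℕ} (hdeg : ∀ v, G.degree v ≤ d) (l : ℝ) (hl : 0 < l) :
    ∑ v : V, ∑ s ∈ indSets G, l ^ s.card * (Ynum G v s : ℝ)
      ≤ (d : ℝ) * ∑ v : V, ∑ s ∈ indSets G,
          (if s ∩ G.neighborFinset v = ∅ then l ^ s.card else 0) := by
  rw [Finset.sum_comm (s := (Finset.univ : Finset V))]
  rw [Finset.sum_comm (s := (Finset.univ : Finset V)), Finset.mul_sum]
  apply Finset.sum_le_sum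
  intro s _
  have hpow : (0:ℝ) ≤ l ^ s.card := le_of_lt (pow_pos hl _)
  have h1 : ∑ v : V, l ^ s.card * (Ynum G v s : ℝ)
      = l ^ s.card * ∑ v : V, (Ynum G v s : ℝ) := by rw [Finset.mul_sum]
  have h2 : ∑ v : V, (if s ∩ G.neighborFinset v = ∅ then l ^ s.card else 0)
      = l ^ s.card * ∑ v : V, (if s ∩ G.neighborFinset v = ∅ then (1:ℝ) else 0) := by
    rw [Finset.mul_sum]
    apply Finset.sum_congr rfl
    intro v _
    rw [mul_ite, mul_one, mul_zero]
  rw [h1, h2]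
  calc l ^ s.card * ∑ v : V, (Ynum G v s : ℝ)
      ≤ l ^ s.card * ((d:ℝ) * ∑ v : V, (if s ∩ G.neighborFinset v = ∅ then (1:ℝ) else 0)) :=
        mul_le_mul_of_nonneg_left (handshake G hdeg s) hpow
    _ = (d:ℝ) * (l ^ s.card * ∑ v : V, (if s ∩ G.neighborFinset v = ∅ then (1:ℝ) else 0)) := by
        ring

lemma convexOn_exp_neg_mul (c' : ℝ) : ConvexOn ℝ Set.univ (fun x : ℝ => Real.exp (-x * c')) := by
  refine ⟨convex_univ, fun x _ y _ a b ha hb hab => ?_⟩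
  have h := convexOn_exp.2 (Set.mem_univ (-x * c')) (Set.mem_univ (-y * c')) ha hb hab
  simp only [smul_eq_mul] at h ⊢
  convert h using 2
  ring

lemma sum_product_eq (g : V → Finset V → ℝ) :
    ∑ p ∈ (Finset.univ : Finset V) ×ˢ indSets G, g p.1 p.2 = ∑ v : V, ∑ s ∈ indSets G, g v s :=
  Finset.sum_product _ _ _

lemma jensen_ineq [Nonempty V] {l : ℝ} (hl : 0 < l) (c' : ℝ) :
    Real.exp (-((∑ v : V, ∑ s ∈ indSets G, l ^ s.card * (Ynum G v s : ℝ))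
        / ((Fintype.card V : ℝ) * indPoly G l)) * c')
      ≤ (∑ v : V, ∑ s ∈ indSets G, l ^ s.card * Real.exp (-(Ynum G v s : ℝ) * c'))
        / ((Fintype.card V : ℝ) * indPoly G l) := by
  set D : ℝ := (Fintype.card V : ℝ) * indPoly G l with hD
  have hn : (0:ℝ) < (Fintype.card V : ℝ) := by exact_mod_cast Fintype.card_pos
  have hDpos : 0 < D := mul_pos hn (indPoly_pos G hl)
  have hz : ∀ z : V × Finset V → ℝ,
      ∑ p ∈ (Finset.univ : Finset V) ×ˢ indSets G, (l ^ p.2.card / D) • z p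
        = (∑ p ∈ (Finset.univ : Finset V) ×ˢ indSets G, l ^ p.2.card * z p) / D := by
    intro z
    rw [Finset.sum_div]
    apply Finset.sum_congr rfl
    intro p _
    rw [smul_eq_mul, div_mul_eq_mul_div]
  have hw0 : ∀ p ∈ (Finset.univ : Finset V) ×ˢ indSets G, 0 ≤ l ^ p.2.card / D :=
    fun p _ => div_nonneg (le_of_lt (pow_pos hl _)) (le_of_lt hDpos)
  have hw1 : ∑ p ∈ (Finset.univ : Finset V) ×ˢ indSets G, l ^ p.2.card / D = 1 := by
    have h0 := sum_product_eq G (fun v s => l ^ s.card / D)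
    rw [h0, ← Finset.sum_div]
    rw [show (∑ i ∈ indSets G, l ^ i.card) = indPoly G l from rfl]
    rw [Finset.sum_const, Finset.card_univ, nsmul_eq_mul, hD]
    have hZ0 : indPoly G l ≠ 0 := ne_of_gt (indPoly_pos G hl)
    have hn0 : (Fintype.card V : ℝ) ≠ 0 := ne_of_gt hn
    field_simp
  have hmem : ∀ p ∈ (Finset.univ : Finset V) ×ˢ indSets G,
      ((Ynum G p.1 p.2 : ℝ)) ∈ (Set.univ : Set ℝ) := fun _ _ => Set.mem_univ _
  have h := (convexOn_exp_neg_mul c').map_sum_le hw0 hw1 hmem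
  rw [hz (fun p => (Ynum G p.1 p.2 : ℝ)),
    hz (fun p => Real.exp (-(Ynum G p.1 p.2 : ℝ) * c'))] at h
  rw [sum_product_eq G (fun v s => l ^ s.card * (Ynum G v s : ℝ)),
    sum_product_eq G (fun v s => l ^ s.card * Real.exp (-(Ynum G v s : ℝ) * c'))] at h
  exact h


lemma exp_le_q [Nonempty V] {d : ℕ} (htf : G.CliqueFree 3) (hdeg : ∀ v, G.degree v ≤ d)
    {l : ℝ} (hl : 0 < l) :
    Real.exp (-(((d:ℝ) * Real.log (1 + l))
        * ((∑ v : V, ∑ s ∈ indSets G, (if s ∩ G.neighborFinset v = ∅ then l ^ s.card else 0))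
          / ((Fintype.card V : ℝ) * indPoly G l))))
      ≤ (∑ v : V, ∑ s ∈ indSets G, (if s ∩ G.neighborFinset v = ∅ then l ^ s.card else 0))
          / ((Fintype.card V : ℝ) * indPoly G l) := by
  have h1l : (0:ℝ) < 1 + l := by linarith
  have hlog : 0 ≤ Real.log (1 + l) := Real.log_nonneg (by linarith)
  have hn : (0:ℝ) < (Fintype.card V : ℝ) := by exact_mod_cast Fintype.card_pos
  have hD : 0 < (Fintype.card V : ℝ) * indPoly G l := mul_pos hn (indPoly_pos G hl)
  have hJ := jensen_ineq G hl (Real.log (1 + l))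
  have hI2 : (∑ v : V, ∑ s ∈ indSets G, (if s ∩ G.neighborFinset v = ∅ then l ^ s.card else 0))
      = ∑ v : V, ∑ s ∈ indSets G,
          l ^ s.card * Real.exp (-(Ynum G v s : ℝ) * Real.log (1 + l)) :=
    Finset.sum_congr rfl (fun v _ => identity2 G htf v hl)
  rw [← hI2] at hJ
  refine le_trans (Real.exp_le_exp.2 ?_) hJ
  have hHS := global_handshake G hdeg l hl
  have h4 : (∑ v : V, ∑ s ∈ indSets G, l ^ s.card * (Ynum G v s : ℝ))
        / ((Fintype.card V : ℝ) * indPoly G l)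
      ≤ ((d:ℝ) * ∑ v : V, ∑ s ∈ indSets G,
          (if s ∩ G.neighborFinset v = ∅ then l ^ s.card else 0))
        / ((Fintype.card V : ℝ) * indPoly G l) :=
    (div_le_div_iff_of_pos_right hD).2 hHS
  have h5 := mul_le_mul_of_nonneg_right h4 hlog
  have h6 : ((d:ℝ) * ∑ v : V, ∑ s ∈ indSets G,
        (if s ∩ G.neighborFinset v = ∅ then l ^ s.card else 0))
        / ((Fintype.card V : ℝ) * indPoly G l) * Real.log (1 + l)
      = ((d:ℝ) * Real.log (1 + l))
        * ((∑ v : V, ∑ s ∈ indSets G, (if s ∩ G.neighborFinset v = ∅ then l ^ s.card else 0))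
          / ((Fintype.card V : ℝ) * indPoly G l)) := by
    ring
  rw [h6] at h5
  rw [neg_mul]
  linarith

lemma final_arith {c q w : ℝ} (hc : 0 < c) (hw : 0 < w) (hWe : w * Real.exp w = c)
    (hq : Real.exp (-(c * q)) ≤ q) : w / c ≤ q := by
  have h1 : 1 ≤ q * Real.exp (c * q) := by
    have := mul_le_mul_of_nonneg_right hq (le_of_lt (Real.exp_pos (c * q)))
    rwa [← Real.exp_add, neg_add_cancel, Real.exp_zero] at this
  have h3 : c ≤ (c * q) * Real.exp (c * q) := by
    calc c = c * 1 := (mul_one c).symm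
      _ ≤ c * (q * Real.exp (c * q)) := mul_le_mul_of_nonneg_left h1 (le_of_lt hc)
      _ = (c * q) * Real.exp (c * q) := by ring
  have hkey : w ≤ c * q := by
    by_contra hcon
    push_neg at hcon
    have h2 : (c * q) * Real.exp (c * q) < w * Real.exp w :=
      mul_lt_mul hcon (le_of_lt (Real.exp_lt_exp.2 hcon)) (Real.exp_pos _) (le_of_lt hw)
    rw [hWe] at h2
    linarith
  rw [div_le_iff₀ hc, mul_comm q c]
  exact hkey

end aux

theorem stmt4 {V : Type*} [Fintype V] [Nonempty V] (G : SimpleGraph V) (d : ℕ)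
    (hd1 : 1 ≤ d) (htf : G.CliqueFree 3) (hdeg : ∀ v, G.degree v ≤ d)
    (l w : ℝ) (hl : 0 < l) (hw : 0 < w)
    (hWe : w * Real.exp w = d * Real.log (1 + l)) :
    (l / (1 + l)) * (w / (d * Real.log (1 + l)))
      ≤ avgSize G l / (Fintype.card V : ℝ) := by
  have h1l : (0:ℝ) < 1 + l := by linarith
  have hlog : 0 < Real.log (1 + l) := Real.log_pos (by linarith)
  have hd0 : (0:ℝ) < (d:ℝ) := by exact_mod_cast hd1
  have hn : (0:ℝ) < (Fintype.card V : ℝ) := by exact_mod_cast Fintype.card_pos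
  have hZpos : 0 < indPoly G l := indPoly_pos G hl
  have hc : 0 < (d:ℝ) * Real.log (1 + l) := mul_pos hd0 hlog
  have hq := exp_le_q G htf hdeg hl
  have hfin := final_arith hc hw hWe hq
  have hS1 : l * deriv (indPoly G) l
      = ∑ v : V, ∑ s ∈ indSets G, (if v ∈ s then l ^ s.card else 0) := by
    rw [mul_deriv_indPoly, ← sum_card_eq]
  have hI1 : (1 + l) * ∑ v : V, ∑ s ∈ indSets G, (if v ∈ s then l ^ s.card else 0)
      = l * ∑ v : V, ∑ s ∈ indSets G,
          (if s ∩ G.neighborFinset v = ∅ then l ^ s.card else 0) := by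
    rw [Finset.mul_sum, Finset.mul_sum]
    exact Finset.sum_congr rfl (fun v _ => identity1 G htf v l)
  have havg : avgSize G l / (Fintype.card V : ℝ)
      = (l / (1 + l)) * ((∑ v : V, ∑ s ∈ indSets G,
          (if s ∩ G.neighborFinset v = ∅ then l ^ s.card else 0))
        / ((Fintype.card V : ℝ) * indPoly G l)) := by
    have hZ0 : indPoly G l ≠ 0 := ne_of_gt hZpos
    have hn0 : (Fintype.card V : ℝ) ≠ 0 := ne_of_gt hn
    have h1l0 : (1 + l) ≠ 0 := ne_of_gt h1l
    simp only [avgSize]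
    rw [hS1, div_div]
    field_simp
    linear_combination hI1
  rw [havg]
  exact mul_le_mul_of_nonneg_left hfin
    (div_nonneg (le_of_lt hl) (le_of_lt h1l))
end

section
/- Let Z be a real-valued random variable with 0 ≤ Z ≤ d (d > 0), and let λ > 0. Then max{ E[Z]/d, E[(1+λ)^{-Z}] } ≥ W(d·log(1+λ)) / (d·log(1+λ)), where W is the Lambert W function. -/
open MeasureTheory

theorem stmt6 {Ω : Type*} [MeasureSpace Ω] [IsProbabilityMeasure (volume : Measure Ω)]
    (Z : Ω → ℝ) (hZm : Measurable Z) (d : ℝ) (hd : 0 < d)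
    (hZ : ∀ ω, 0 ≤ Z ω ∧ Z ω ≤ d) (l w : ℝ) (hl : 0 < l) (hw : 0 < w)
    (hWe : w * Real.exp w = d * Real.log (1 + l)) :
    w / (d * Real.log (1 + l))
      ≤ max ((∫ ω, Z ω) / d) (∫ ω, (1 + l) ^ (-(Z ω))) := by
  set c := Real.log (1 + l) with hc_def
  have h1l : (0:ℝ) < 1 + l := by linarith
  have hc : 0 < c := Real.log_pos (by linarith)
  have hZint : Integrable Z := by
    refine ⟨hZm.aestronglyMeasurable, ?_⟩
    apply MeasureTheory.HasFiniteIntegral.of_bounded (C := d)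
    filter_upwards with ω
    rw [Real.norm_eq_abs, abs_le]
    exact ⟨by linarith [(hZ ω).1], (hZ ω).2⟩
  set m := ∫ ω, Z ω with hm_def
  have hkey : w / (d * c) = Real.exp (-w) := by
    rw [← hWe, Real.exp_neg]
    field_simp
  -- rewrite rpow integral as exp
  have hrw : (∫ ω, (1 + l) ^ (-(Z ω))) = ∫ ω, Real.exp (c * -(Z ω)) := by
    congr 1
    funext ω
    rw [Real.rpow_def_of_pos h1l]
  rcases le_or_gt (w / c) m with h | h
  · refine le_max_of_le_left ?_
    have : w / (d * c) = (w / c) / d := by ring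
    rw [this]
    gcongr
  · refine le_max_of_le_right ?_
    rw [hrw, hkey]
    have hexpint : Integrable (fun ω => Real.exp (c * -(Z ω))) := by
      refine ⟨(Real.measurable_exp.comp (hZm.neg.const_mul c)).aestronglyMeasurable, ?_⟩
      · apply MeasureTheory.HasFiniteIntegral.of_bounded (C := 1)
        filter_upwards with ω
        rw [Real.norm_eq_abs, abs_of_pos (Real.exp_pos _)]
        apply Real.exp_le_one_iff.mpr
        nlinarith [(hZ ω).1, hc]
    have hpt : ∀ ω, Real.exp (-(c * m)) * (1 + c * (m - Z ω)) ≤ Real.exp (c * -(Z ω)) := by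
      intro ω
      have h2 : Real.exp (c * -(Z ω)) = Real.exp (-(c * m)) * Real.exp (c * (m - Z ω)) := by
        rw [← Real.exp_add]; ring_nf
      rw [h2]
      have := Real.add_one_le_exp (c * (m - Z ω))
      have hpos := (Real.exp_pos (-(c * m))).le
      nlinarith [Real.exp_pos (c * (m - Z ω))]
    have hintmono := integral_mono
      (by
        have : (fun ω => Real.exp (-(c * m)) * (1 + c * (m - Z ω)))
            = fun ω => (Real.exp (-(c * m)) * (1 + c * m)) - (Real.exp (-(c * m)) * c) * Z ω := by
          funext ω; ring
        rw [this]
        exact (integrable_const _).sub (hZint.const_mul _))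
      hexpint hpt
    have hcomp : (∫ ω, Real.exp (-(c * m)) * (1 + c * (m - Z ω))) = Real.exp (-(c * m)) := by
      have heq : (fun ω => Real.exp (-(c * m)) * (1 + c * (m - Z ω)))
          = fun ω => (Real.exp (-(c * m)) * (1 + c * m)) - (Real.exp (-(c * m)) * c) * Z ω := by
        funext ω; ring
      rw [heq, integral_sub (integrable_const _) (hZint.const_mul _),
        integral_const, MeasureTheory.integral_const_mul]
      simp [← hm_def]
      ring
    rw [hcomp] at hintmono
    refine le_trans ?_ hintmono
    apply Real.exp_le_exp.mpr
    have := (lt_div_iff₀ hc).mp h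
    linarith
end

section
/- For any random variable Z with 0 ≤ Z ≤ d and λ > 0, (1+λ)^{-Z} ≤ (Z/d)·(1+λ)^{-d} + 1 − Z/d pointwise; consequently, if E[Z]/d = E[(1+λ)^{-Z}] = c·(1+λ)/λ for some c, then c ≤ λ(1+λ)^{d-1}/(2(1+λ)^d − 1). -/
open MeasureTheory

theorem stmt10 {Ω : Type*} [MeasureSpace Ω] [IsProbabilityMeasure (volume : Measure Ω)]
    (Z : Ω → ℝ) (hZm : Measurable Z) (d l : ℝ) (hd : 0 < d) (hl : 0 < l)
    (hZ : ∀ ω, 0 ≤ Z ω ∧ Z ω ≤ d) :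
    (∀ ω, (1 + l) ^ (-(Z ω)) ≤ (Z ω / d) * (1 + l) ^ (-d) + 1 - Z ω / d) ∧
      ∀ c : ℝ, (∫ ω, Z ω) / d = ∫ ω, (1 + l) ^ (-(Z ω)) →
        (∫ ω, Z ω) / d = c * (1 + l) / l →
        c ≤ l * (1 + l) ^ (d - 1) / (2 * (1 + l) ^ d - 1) := by
  have h1l : (0:ℝ) < 1 + l := by linarith
  have ha0 : (0:ℝ) < (1 + l) ^ (-d) := Real.rpow_pos_of_pos h1l _
  have key : ∀ ω, (1 + l) ^ (-(Z ω)) ≤ (Z ω / d) * (1 + l) ^ (-d) + 1 - Z ω / d := by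
    intro ω
    obtain ⟨h0, hzd⟩ := hZ ω
    have ht0 : 0 ≤ Z ω / d := div_nonneg h0 hd.le
    have ht1 : Z ω / d ≤ 1 := (div_le_one hd).2 hzd
    have hgm := Real.geom_mean_le_arith_mean2_weighted (w₁ := Z ω / d)
      (w₂ := 1 - Z ω / d) ht0 (by linarith) ha0.le zero_le_one (by ring)
    rw [Real.one_rpow, mul_one, mul_one] at hgm
    calc (1 + l) ^ (-(Z ω)) = ((1 + l) ^ (-d)) ^ (Z ω / d) := by
          rw [← Real.rpow_mul h1l.le]
          congr 1
          field_simp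
      _ ≤ Z ω / d * (1 + l) ^ (-d) + (1 - Z ω / d) := hgm
      _ = Z ω / d * (1 + l) ^ (-d) + 1 - Z ω / d := by ring
  refine ⟨key, fun c h1 h2 => ?_⟩
  -- integrability facts
  have hZi : Integrable Z := by
    refine (integrable_const d).mono' hZm.aestronglyMeasurable ?_
    filter_upwards with ω
    obtain ⟨h0, hzd⟩ := hZ ω
    rw [Real.norm_eq_abs, abs_of_nonneg h0]; exact hzd
  have hfm : Measurable fun ω => (1 + l) ^ (-(Z ω)) := by
    have : (fun ω => (1 + l) ^ (-(Z ω))) =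
        fun ω => Real.exp (Real.log (1 + l) * (-(Z ω))) := by
      funext ω; rw [Real.rpow_def_of_pos h1l]
    rw [this]
    exact (hZm.neg.const_mul _).exp
  have hfi : Integrable fun ω => (1 + l) ^ (-(Z ω)) := by
    refine (integrable_const (1:ℝ)).mono' hfm.aestronglyMeasurable ?_
    filter_upwards with ω
    rw [Real.norm_eq_abs, abs_of_nonneg (Real.rpow_pos_of_pos h1l _).le]
    exact Real.rpow_le_one_of_one_le_of_nonpos (by linarith) (neg_nonpos.2 (hZ ω).1)
  have hgi1 : Integrable fun ω => Z ω / d * (1 + l) ^ (-d) + 1 :=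
    ((hZi.div_const d).mul_const _).add (integrable_const 1)
  have hgi : Integrable fun ω => Z ω / d * (1 + l) ^ (-d) + 1 - Z ω / d :=
    hgi1.sub (hZi.div_const d)
  -- integrate the pointwise bound
  have hmono : ∫ ω, (1 + l) ^ (-(Z ω)) ≤
      (∫ ω, Z ω) / d * (1 + l) ^ (-d) + 1 - (∫ ω, Z ω) / d := by
    have h := integral_mono hfi hgi key
    have heq : ∫ ω, (Z ω / d * (1 + l) ^ (-d) + 1 - Z ω / d) =
        (∫ ω, Z ω) / d * (1 + l) ^ (-d) + 1 - (∫ ω, Z ω) / d := by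
      rw [integral_sub hgi1 (hZi.div_const d),
        integral_add ((hZi.div_const d).mul_const _) (integrable_const 1),
        integral_mul_const, integral_div, integral_const]
      simp
    rwa [heq] at h
  set m : ℝ := (∫ ω, Z ω) / d with hm
  rw [← h1] at hmono
  -- m ≤ m * a + 1 - m with a = (1+l)^(-d)
  have hD : (1:ℝ) < (1 + l) ^ d :=
    (Real.one_lt_rpow_iff_of_pos h1l).2 (Or.inl ⟨by linarith, hd⟩)
  have haD : (1 + l) ^ (-d) = ((1 + l) ^ d)⁻¹ := by
    rw [Real.rpow_neg h1l.le]
  have ha1 : (1 + l) ^ (-d) < 1 := by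
    rw [haD]; exact inv_lt_one_of_one_lt₀ hD
  have hmle : m ≤ 1 / (2 - (1 + l) ^ (-d)) := by
    rw [le_div_iff₀ (by linarith)]
    nlinarith [hmono]
  have hc : c = m * l / (1 + l) := by
    rw [h2]; field_simp
  have hkey : 1 / (2 - (1 + l) ^ (-d)) * l / (1 + l) =
      l * (1 + l) ^ (d - 1) / (2 * (1 + l) ^ d - 1) := by
    have hd1 : (1 + l) ^ (d - 1) = (1 + l) ^ d / (1 + l) := by
      rw [Real.rpow_sub h1l, Real.rpow_one]
    rw [hd1, haD]
    have hD0 : (0:ℝ) < (1 + l) ^ d := by linarith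
    field_simp
  rw [hc, ← hkey]
  have hpos : 0 < l / (1 + l) := div_pos hl h1l
  calc m * l / (1 + l) = m * (l / (1 + l)) := by ring
    _ ≤ 1 / (2 - (1 + l) ^ (-d)) * (l / (1 + l)) := by
        exact mul_le_mul_of_nonneg_right hmle hpos.le
    _ = 1 / (2 - (1 + l) ^ (-d)) * l / (1 + l) := by ring
end
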